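/- Let X_1,...,X_n, A, B, C be jointly distributed discrete random variables satisfying I(A:C|B) = 0 and I(B:C|A) = 0. Then H(X_1...X_n) + (n-1) I(AB:C) ≤ Σ_{i=1}^n H(X_i) + Σ_{i=1}^n I(A:B|X_i). -/

import Mathlib

open Finset BigOperators

noncomputable section

variable {ι : Type*}

/-- Merge an assignment on a subset `J` with one on its complement. -/
def Finset.mergePi [Fintype ι] [DecidableEq ι] {s : ι → Type*} (J : Finset ι)
    (a : (i : J) → s i.1) (z : (i : (Jᶜ : Finset ι)) → s i.1) : (i : ι) → s i :=
  fun i => if h : i ∈ J then a ⟨i, h⟩ else z ⟨i, Finset.mem_compl.mpr h⟩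

/-- The marginal of a joint probability mass function on the coordinates in `J`. -/
noncomputable def marginal [Fintype ι] [DecidableEq ι] {s : ι → Type*}
    [∀ i, Fintype (s i)] [∀ i, DecidableEq (s i)]
    (p : ((i : ι) → s i) → ℝ) (J : Finset ι) : ((i : J) → s i.1) → ℝ :=
  fun a => ∑ z : (i : (Jᶜ : Finset ι)) → s i.1, p (J.mergePi a z)

/-- Shannon entropy of the marginal on the coordinates in `J`. -/
noncomputable def Hsh [Fintype ι] [DecidableEq ι] {s : ι → Type*}
    [∀ i, Fintype (s i)] [∀ i, DecidableEq (s i)]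
    (p : ((i : ι) → s i) → ℝ) (J : Finset ι) : ℝ :=
  -∑ a : (i : J) → s i.1, marginal p J a * Real.log (marginal p J a)

/-- Classical conditional mutual information `I(α:β|γ)` of a joint pmf. -/
noncomputable def Ish [Fintype ι] [DecidableEq ι] {s : ι → Type*}
    [∀ i, Fintype (s i)] [∀ i, DecidableEq (s i)]
    (p : ((i : ι) → s i) → ℝ) (α β γ : Finset ι) : ℝ :=
  Hsh p (α ∪ γ) + Hsh p (β ∪ γ) - Hsh p γ - Hsh p (α ∪ β ∪ γ)

abbrev Idx (n : ℕ) := Sum (Fin 3) (Fin n)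
def pA (n : ℕ) : Finset (Idx n) := {Sum.inl 0}
def pB (n : ℕ) : Finset (Idx n) := {Sum.inl 1}
def pC (n : ℕ) : Finset (Idx n) := {Sum.inl 2}
def pX (n : ℕ) (i : Fin n) : Finset (Idx n) := {Sum.inr i}
def pXall (n : ℕ) : Finset (Idx n) := Finset.univ.image Sum.inr


end

noncomputable section EntTools
set_option linter.unusedSectionVars false

variable {Ω : Type*} [Fintype Ω] {p : Ω → ℝ}

def prb (p : Ω → ℝ) {V : Type*} [DecidableEq V] (k : Ω → V) (v : V) : ℝ :=
  ∑ ω ∈ Finset.univ.filter (fun ω => k ω = v), p ω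

def entf (p : Ω → ℝ) {V : Type*} [Fintype V] [DecidableEq V] (k : Ω → V) : ℝ :=
  -∑ v : V, prb p k v * Real.log (prb p k v)

variable {V W U : Type*} [Fintype V] [DecidableEq V] [Fintype W] [DecidableEq W]
  [Fintype U] [DecidableEq U]

theorem prb_nonneg (hp : ∀ ω, 0 ≤ p ω) (k : Ω → V) (v : V) : 0 ≤ prb p k v :=
  Finset.sum_nonneg fun ω _ => hp ω

theorem prb_mono (hp : ∀ ω, 0 ≤ p ω) {k : Ω → V} {k' : Ω → W} {v : V} {v' : W}
    (h : ∀ ω, k ω = v → k' ω = v') : prb p k v ≤ prb p k' v' := by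
  apply Finset.sum_le_sum_of_subset_of_nonneg
  · intro ω hω
    simp only [Finset.mem_filter, Finset.mem_univ, true_and] at hω ⊢
    exact h ω hω
  · intro ω _ _; exact hp ω

theorem prb_congr {k : Ω → V} {k' : Ω → W} {v : V} {v' : W}
    (h : ∀ ω, k ω = v ↔ k' ω = v') : prb p k v = prb p k' v' := by
  unfold prb
  apply Finset.sum_congr _ (fun _ _ => rfl)
  ext ω; simp [h ω]

theorem prb_eq_zero {k : Ω → V} {v : V} (h : ∀ ω, k ω ≠ v) : prb p k v = 0 := by
  unfold prb
  rw [Finset.sum_eq_zero]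
  intro ω hω
  simp only [Finset.mem_filter] at hω
  exact absurd hω.2 (h ω)

theorem sum_prb (k : Ω → V) : ∑ v : V, prb p k v = ∑ ω, p ω := by
  unfold prb
  exact Finset.sum_fiberwise Finset.univ k p

theorem prb_comp_eq_sum (e : V → W) (k : Ω → V) (w : W) :
    prb p (fun ω => e (k ω)) w = ∑ v ∈ Finset.univ.filter (fun v => e v = w), prb p k v := by
  unfold prb
  rw [Finset.sum_fiberwise_eq_sum_filter Finset.univ (Finset.univ.filter (fun v => e v = w)) k p]
  apply Finset.sum_congr _ (fun _ _ => rfl)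
  ext ω; simp

/-- entropy is invariant under injective recoding -/
theorem prb_fst (f : Ω → V) (g : Ω → W) (v : V) :
    ∑ w : W, prb p (fun ω => (f ω, g ω)) (v, w) = prb p f v := by
  unfold prb
  have hf : ∀ w, Finset.univ.filter (fun ω => (f ω, g ω) = (v, w)) =
      (Finset.univ.filter (fun ω => f ω = v)).filter (fun ω => g ω = w) := by
    intro w; rw [Finset.filter_filter]; apply Finset.filter_congr; intro ω _
    simp [Prod.ext_iff]
  simp_rw [hf]
  rw [Finset.sum_fiberwise_eq_sum_filter (Finset.univ.filter (fun ω => f ω = v))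
    Finset.univ g p]
  simp

theorem prb_snd (f : Ω → V) (g : Ω → W) (w : W) :
    ∑ v : V, prb p (fun ω => (f ω, g ω)) (v, w) = prb p g w := by
  unfold prb
  have hf : ∀ v, Finset.univ.filter (fun ω => (f ω, g ω) = (v, w)) =
      (Finset.univ.filter (fun ω => g ω = w)).filter (fun ω => f ω = v) := by
    intro v; rw [Finset.filter_filter]; apply Finset.filter_congr; intro ω _
    simp [Prod.ext_iff, and_comm]
  simp_rw [hf]
  rw [Finset.sum_fiberwise_eq_sum_filter (Finset.univ.filter (fun ω => g ω = w))
    Finset.univ f p]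
  simp

/-- entropy is invariant under injective recoding -/
theorem entf_comp_inj {e : V → W} (he : Function.Injective e) (k : Ω → V) :
    entf p (fun ω => e (k ω)) = entf p k := by
  unfold entf
  congr 1
  have h1 : ∀ v : V, prb p (fun ω => e (k ω)) (e v) = prb p k v := by
    intro v
    apply prb_congr; intro ω; exact ⟨fun h => he h, fun h => by rw [h]⟩
  calc ∑ w : W, prb p (fun ω => e (k ω)) w * Real.log (prb p (fun ω => e (k ω)) w)
      = ∑ w ∈ Finset.univ.image e, prb p (fun ω => e (k ω)) w *
          Real.log (prb p (fun ω => e (k ω)) w) := by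
        symm
        apply Finset.sum_subset (Finset.subset_univ _)
        intro w _ hw
        have : prb p (fun ω => e (k ω)) w = 0 := by
          apply prb_eq_zero
          intro ω h
          exact hw (Finset.mem_image.mpr ⟨k ω, Finset.mem_univ _, h⟩)
        rw [this, Real.log_zero, mul_zero]
    _ = ∑ v : V, prb p (fun ω => e (k ω)) (e v) * Real.log (prb p (fun ω => e (k ω)) (e v)) :=
        Finset.sum_image (fun x _ y _ h => he h)
    _ = ∑ v : V, prb p k v * Real.log (prb p k v) := by
        apply Finset.sum_congr rfl; intro v _; rw [h1 v]

/-- adding an (a.s.) deterministic function of `k` as a second component keeps entropy. -/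
theorem entf_pair_det {k : Ω → V} {r : Ω → W} (φ : V → W)
    (h : ∀ ω, p ω ≠ 0 → r ω = φ (k ω)) :
    entf p (fun ω => (k ω, r ω)) = entf p k := by
  have key : ∀ v w, prb p (fun ω => (k ω, r ω)) (v, w) =
      if w = φ v then prb p k v else 0 := by
    intro v w
    by_cases hw : w = φ v
    · subst hw
      rw [if_pos rfl]
      unfold prb
      apply Finset.sum_subset
      · intro ω hω
        simp only [Finset.mem_filter, Finset.mem_univ, true_and, Prod.mk.injEq] at hω ⊢
        exact hω.1
      · intro ω hω hω2
        simp only [Finset.mem_filter, Finset.mem_univ, true_and, Prod.mk.injEq] at hω hω2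
        by_contra hne
        exact hω2 ⟨hω, (h ω hne).trans (by rw [hω])⟩
    · rw [if_neg hw]
      unfold prb
      apply Finset.sum_eq_zero
      intro ω hω
      simp only [Finset.mem_filter, Finset.mem_univ, true_and, Prod.mk.injEq] at hω
      by_contra hne
      exact hw (hω.2.symm.trans ((h ω hne).trans (by rw [hω.1])))
  unfold entf
  congr 1
  rw [Fintype.sum_prod_type]
  apply Finset.sum_congr rfl
  intro v _
  rw [Finset.sum_eq_single (φ v)]
  · rw [key v (φ v), if_pos rfl]
  · intro w _ hw
    rw [key v w, if_neg hw, Real.log_zero, mul_zero]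
  · intro h; exact absurd (Finset.mem_univ _) h

theorem entf_congr {f : Ω → V} {g : Ω → W} (u : V → W) (v : W → V)
    (hu : ∀ ω, p ω ≠ 0 → g ω = u (f ω)) (hv : ∀ ω, p ω ≠ 0 → f ω = v (g ω)) :
    entf p f = entf p g := by
  have h1 : entf p (fun ω => (f ω, g ω)) = entf p f := entf_pair_det u hu
  have h2 : entf p (fun ω => (g ω, f ω)) = entf p g := entf_pair_det v hv
  have h3 : entf p (fun ω => (g ω, f ω)) = entf p (fun ω => (f ω, g ω)) :=
    entf_comp_inj (e := Prod.swap) (fun a b h => by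
      simpa [Prod.ext_iff, and_comm] using h) (fun ω => (f ω, g ω))
  rw [← h1, ← h3, h2]

/-- monotonicity : `H(f) ≤ H(f,g)` -/
theorem entf_le_pair (hp : ∀ ω, 0 ≤ p ω) (f : Ω → V) (g : Ω → W) :
    entf p f ≤ entf p (fun ω => (f ω, g ω)) := by
  unfold entf
  rw [neg_le_neg_iff, Fintype.sum_prod_type]
  apply Finset.sum_le_sum
  intro v _
  have hmarg : prb p f v = ∑ w : W, prb p (fun ω => (f ω, g ω)) (v, w) := (prb_fst f g v).symm
  calc ∑ w : W, prb p (fun ω => (f ω, g ω)) (v, w) * Real.log (prb p (fun ω => (f ω, g ω)) (v, w))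
      ≤ ∑ w : W, prb p (fun ω => (f ω, g ω)) (v, w) * Real.log (prb p f v) := by
        apply Finset.sum_le_sum
        intro w _
        rcases eq_or_lt_of_le (prb_nonneg hp (fun ω => (f ω, g ω)) (v, w)) with h0 | h0
        · rw [← h0]; simp
        · apply mul_le_mul_of_nonneg_left _ (le_of_lt h0)
          apply Real.log_le_log h0
          exact prb_mono hp (fun ω h => (Prod.ext_iff.mp h).1)
    _ = prb p f v * Real.log (prb p f v) := by rw [← Finset.sum_mul, ← hmarg]

theorem entf_unique [Unique W] (hp1 : ∑ ω, p ω = 1) (f : Ω → W) : entf p f = 0 := by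
  unfold entf
  rw [Finset.sum_eq_single default]
  · have : prb p f default = 1 := by
      rw [← hp1]; unfold prb
      apply Finset.sum_congr _ (fun _ _ => rfl)
      ext ω; simpa using Unique.eq_default (f ω)
    rw [this]; simp
  · intro w _ hw; exact absurd (Unique.eq_default w) hw
  · intro h; exact absurd (Finset.mem_univ _) h

end EntTools


section PerTerm

/-- per-term log-sum inequality with equality condition -/
theorem perterm (x y z w : ℝ) (hx : 0 ≤ x) (hxy : x ≤ y) (hxz : x ≤ z)
    (hyw : y ≤ w) (hzw : z ≤ w) :
    0 ≤ x * (Real.log x + Real.log w - Real.log y - Real.log z) - (x - y * z / w) ∧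
    (x * (Real.log x + Real.log w - Real.log y - Real.log z) - (x - y * z / w) = 0 ↔
      x * w = y * z) := by
  have hy : 0 ≤ y := hx.trans hxy
  have hz : 0 ≤ z := hx.trans hxz
  have hw : 0 ≤ w := hy.trans hyw
  rcases eq_or_lt_of_le hw with hw0 | hw0
  · have hy0 : y = 0 := le_antisymm (hyw.trans hw0.symm.le) hy
    have hx0 : x = 0 := le_antisymm (hxy.trans hy0.le) hx
    rw [hx0, hy0]
    norm_num
  rcases eq_or_lt_of_le hx with hx0 | hx0
  · rw [← hx0]
    constructor
    · simp only [zero_mul, zero_sub, sub_zero, neg_neg, zero_add]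
      positivity
    · rw [zero_mul]
      constructor
      · intro h
        have : y * z / w = 0 := by linarith
        rcases div_eq_zero_iff.mp this with h' | h'
        · rw [zero_mul]; exact h'.symm
        · exact absurd h' (ne_of_gt hw0)
      · intro h
        rw [← h]
        simp
  · have hy0 : 0 < y := hx0.trans_le hxy
    have hz0 : 0 < z := hx0.trans_le hxz
    set r : ℝ := y * z / (w * x) with hr
    have hr0 : 0 < r := by positivity
    have hlog : Real.log x + Real.log w - Real.log y - Real.log z = -Real.log r := by
      rw [hr, Real.log_div (by positivity) (by positivity), Real.log_mul (ne_of_gt hy0)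
        (ne_of_gt hz0), Real.log_mul (ne_of_gt hw0) (ne_of_gt hx0)]
      ring
    have hyzw : y * z / w = r * x := by
      field_simp [hr]
      rw [hr]; field_simp
    rw [hlog, hyzw]
    have key : x * -Real.log r - (x - r * x) = x * ((r - 1) - Real.log r) := by ring
    rw [key]
    have hlogr : Real.log r ≤ r - 1 := Real.log_le_sub_one_of_pos hr0
    constructor
    · apply mul_nonneg hx0.le
      linarith
    · constructor
      · intro h
        have h2 : (r - 1) - Real.log r = 0 := by
          rcases mul_eq_zero.mp h with h' | h'
          · exact absurd h' (ne_of_gt hx0)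
          · exact h'
        have hr1 : r = 1 := by
          by_contra hne
          have := Real.log_lt_sub_one_of_pos hr0 hne
          linarith
        have : y * z = w * x := by
          have := (div_eq_one_iff_eq (by positivity : w * x ≠ 0)).mp hr1
          linarith
        linarith [this]
      · intro h
        have hr1 : r = 1 := by
          rw [hr]
          rw [div_eq_one_iff_eq (by positivity : w * x ≠ 0)]
          linarith
        rw [hr1]
        simp

end PerTerm

noncomputable section MI
set_option linter.unusedSectionVars false

variable {Ω : Type*} [Fintype Ω] {p : Ω → ℝ}
variable {V W U : Type*} [Fintype V] [DecidableEq V] [Fintype W] [DecidableEq W]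
  [Fintype U] [DecidableEq U]

theorem sum3_eq_zero_iff {G : V → W → U → ℝ} (h : ∀ s t u, 0 ≤ G s t u) :
    (∑ s : V, ∑ t : W, ∑ u : U, G s t u) = 0 ↔ ∀ s t u, G s t u = 0 := by
  constructor
  · intro H s t u
    have h1 : ∀ s ∈ Finset.univ (α := V), (0:ℝ) ≤ ∑ t : W, ∑ u : U, G s t u :=
      fun s _ => Finset.sum_nonneg fun t _ => Finset.sum_nonneg fun u _ => h s t u
    have H1 := (Finset.sum_eq_zero_iff_of_nonneg h1).mp H s (Finset.mem_univ s)
    have h2 : ∀ t ∈ Finset.univ (α := W), (0:ℝ) ≤ ∑ u : U, G s t u :=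
      fun t _ => Finset.sum_nonneg fun u _ => h s t u
    have H2 := (Finset.sum_eq_zero_iff_of_nonneg h2).mp H1 t (Finset.mem_univ t)
    exact (Finset.sum_eq_zero_iff_of_nonneg (fun u _ => h s t u)).mp H2 u (Finset.mem_univ u)
  · intro H
    apply Finset.sum_eq_zero; intro s _
    apply Finset.sum_eq_zero; intro t _
    apply Finset.sum_eq_zero; intro u _
    exact H s t u

/-- conditional mutual information I(f:h|g) -/
def mif (p : Ω → ℝ) (f : Ω → V) (g : Ω → W) (h : Ω → U) : ℝ :=
  entf p (fun ω => (f ω, g ω)) + entf p (fun ω => (g ω, h ω)) - entf p g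
    - entf p (fun ω => (f ω, g ω, h ω))

section MIlemmas
variable (f : Ω → V) (g : Ω → W) (h : Ω → U)

theorem hPfg (s : V) (t : W) :
    prb p (fun ω => (f ω, g ω)) (s, t) = ∑ u : U, prb p (fun ω => (f ω, g ω, h ω)) (s, t, u) := by
  rw [← prb_fst (fun ω => (f ω, g ω)) h (s, t)]
  apply Finset.sum_congr rfl
  intro u _
  apply prb_congr
  intro ω
  simp [Prod.ext_iff, and_assoc]

theorem hPgh (t : W) (u : U) :
    prb p (fun ω => (g ω, h ω)) (t, u) = ∑ s : V, prb p (fun ω => (f ω, g ω, h ω)) (s, t, u) := by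
  rw [← prb_snd f (fun ω => (g ω, h ω)) (t, u)]

theorem hPg (t : W) :
    prb p g t = ∑ s : V, ∑ u : U, prb p (fun ω => (f ω, g ω, h ω)) (s, t, u) := by
  rw [Finset.sum_comm]
  rw [show prb p g t = ∑ u : U, prb p (fun ω => (g ω, h ω)) (t, u) from (prb_fst g h t).symm]
  apply Finset.sum_congr rfl
  intro u _
  exact hPgh f g h t u

theorem mif_eq_D :
    mif p f g h = ∑ s : V, ∑ t : W, ∑ u : U,
      prb p (fun ω => (f ω, g ω, h ω)) (s, t, u) *
        (Real.log (prb p (fun ω => (f ω, g ω, h ω)) (s, t, u)) + Real.log (prb p g t)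
         - Real.log (prb p (fun ω => (f ω, g ω)) (s, t))
         - Real.log (prb p (fun ω => (g ω, h ω)) (t, u))) := by
  have e4 : entf p (fun ω => (f ω, g ω, h ω)) = -∑ s : V, ∑ t : W, ∑ u : U,
      prb p (fun ω => (f ω, g ω, h ω)) (s, t, u) *
        Real.log (prb p (fun ω => (f ω, g ω, h ω)) (s, t, u)) := by
    unfold entf
    congr 1
    rw [Fintype.sum_prod_type]
    apply Finset.sum_congr rfl; intro s _
    rw [Fintype.sum_prod_type]
  have e1 : entf p (fun ω => (f ω, g ω)) = -∑ s : V, ∑ t : W, ∑ u : U,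
      prb p (fun ω => (f ω, g ω, h ω)) (s, t, u) *
        Real.log (prb p (fun ω => (f ω, g ω)) (s, t)) := by
    unfold entf
    congr 1
    rw [Fintype.sum_prod_type]
    apply Finset.sum_congr rfl; intro s _
    apply Finset.sum_congr rfl; intro t _
    rw [hPfg f g h s t, Finset.sum_mul]
  have e2 : entf p (fun ω => (g ω, h ω)) = -∑ s : V, ∑ t : W, ∑ u : U,
      prb p (fun ω => (f ω, g ω, h ω)) (s, t, u) *
        Real.log (prb p (fun ω => (g ω, h ω)) (t, u)) := by
    unfold entf
    congr 1
    rw [show (∑ s : V, ∑ t : W, ∑ u : U,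
      prb p (fun ω => (f ω, g ω, h ω)) (s, t, u) *
        Real.log (prb p (fun ω => (g ω, h ω)) (t, u))) = ∑ t : W, ∑ u : U, ∑ s : V,
      prb p (fun ω => (f ω, g ω, h ω)) (s, t, u) *
        Real.log (prb p (fun ω => (g ω, h ω)) (t, u)) from by
        rw [Finset.sum_comm]
        apply Finset.sum_congr rfl; intro t _
        rw [Finset.sum_comm]]
    rw [Fintype.sum_prod_type]
    apply Finset.sum_congr rfl; intro t _
    apply Finset.sum_congr rfl; intro u _
    rw [hPgh f g h t u, Finset.sum_mul]
  have e3 : entf p g = -∑ s : V, ∑ t : W, ∑ u : U,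
      prb p (fun ω => (f ω, g ω, h ω)) (s, t, u) * Real.log (prb p g t) := by
    unfold entf
    congr 1
    rw [show (∑ s : V, ∑ t : W, ∑ u : U,
      prb p (fun ω => (f ω, g ω, h ω)) (s, t, u) * Real.log (prb p g t))
      = ∑ t : W, ∑ s : V, ∑ u : U,
      prb p (fun ω => (f ω, g ω, h ω)) (s, t, u) * Real.log (prb p g t) from
        Finset.sum_comm]
    apply Finset.sum_congr rfl; intro t _
    rw [hPg f g h t, Finset.sum_mul]
    apply Finset.sum_congr rfl; intro s _
    rw [Finset.sum_mul]
  rw [mif, e1, e2, e3, e4]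
  simp only [mul_add, mul_sub, Finset.sum_add_distrib, Finset.sum_sub_distrib]
  ring

theorem comp_sum_zero :
    ∑ s : V, ∑ t : W, ∑ u : U,
      (prb p (fun ω => (f ω, g ω, h ω)) (s, t, u)
        - prb p (fun ω => (f ω, g ω)) (s, t) * prb p (fun ω => (g ω, h ω)) (t, u) / prb p g t)
      = 0 := by
  simp only [Finset.sum_sub_distrib]
  rw [sub_eq_zero]
  have lhs : ∑ s : V, ∑ t : W, ∑ u : U, prb p (fun ω => (f ω, g ω, h ω)) (s, t, u)
      = ∑ t : W, prb p g t := by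
    rw [Finset.sum_comm]
    apply Finset.sum_congr rfl; intro t _
    exact (hPg f g h t).symm
  have rhs : ∑ s : V, ∑ t : W, ∑ u : U,
      prb p (fun ω => (f ω, g ω)) (s, t) * prb p (fun ω => (g ω, h ω)) (t, u) / prb p g t
      = ∑ t : W, prb p g t := by
    rw [Finset.sum_comm]
    apply Finset.sum_congr rfl; intro t _
    have hin : ∀ s : V, (∑ u : U, prb p (fun ω => (f ω, g ω)) (s, t) *
        prb p (fun ω => (g ω, h ω)) (t, u) / prb p g t)
        = prb p (fun ω => (f ω, g ω)) (s, t) * prb p g t / prb p g t := by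
      intro s
      rw [← Finset.sum_div, ← Finset.mul_sum, prb_fst g h t]
    simp_rw [hin]
    rw [← Finset.sum_div, ← Finset.sum_mul, prb_snd f g t]
    by_cases hg : prb p g t = 0
    · rw [hg]; simp
    · field_simp
  rw [lhs, rhs]

theorem mif_eq_G :
    mif p f g h = ∑ s : V, ∑ t : W, ∑ u : U,
      (prb p (fun ω => (f ω, g ω, h ω)) (s, t, u) *
        (Real.log (prb p (fun ω => (f ω, g ω, h ω)) (s, t, u)) + Real.log (prb p g t)
         - Real.log (prb p (fun ω => (f ω, g ω)) (s, t))
         - Real.log (prb p (fun ω => (g ω, h ω)) (t, u)))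
       - (prb p (fun ω => (f ω, g ω, h ω)) (s, t, u)
        - prb p (fun ω => (f ω, g ω)) (s, t) * prb p (fun ω => (g ω, h ω)) (t, u) / prb p g t)) := by
  simp only [Finset.sum_sub_distrib]
  have h2 := comp_sum_zero f g h (p := p)
  simp only [Finset.sum_sub_distrib] at h2
  rw [sub_eq_zero] at h2
  rw [← mif_eq_D]
  rw [h2]
  ring

theorem prb3_le_fg (hp : ∀ ω, 0 ≤ p ω) (s : V) (t : W) (u : U) :
    prb p (fun ω => (f ω, g ω, h ω)) (s, t, u) ≤ prb p (fun ω => (f ω, g ω)) (s, t) := by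
  apply prb_mono hp
  intro ω hω
  rw [Prod.ext_iff] at hω
  obtain ⟨h1, h23⟩ := hω
  rw [Prod.ext_iff] at h23
  exact Prod.ext h1 h23.1

theorem prb3_le_gh (hp : ∀ ω, 0 ≤ p ω) (s : V) (t : W) (u : U) :
    prb p (fun ω => (f ω, g ω, h ω)) (s, t, u) ≤ prb p (fun ω => (g ω, h ω)) (t, u) := by
  apply prb_mono hp
  intro ω hω
  rw [Prod.ext_iff] at hω
  exact hω.2

theorem prbfg_le_g (hp : ∀ ω, 0 ≤ p ω) (s : V) (t : W) :
    prb p (fun ω => (f ω, g ω)) (s, t) ≤ prb p g t := by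
  apply prb_mono hp
  intro ω hω
  exact (Prod.ext_iff.mp hω).2

theorem prbgh_le_g (hp : ∀ ω, 0 ≤ p ω) (t : W) (u : U) :
    prb p (fun ω => (g ω, h ω)) (t, u) ≤ prb p g t := by
  apply prb_mono hp
  intro ω hω
  exact (Prod.ext_iff.mp hω).1

theorem G_nonneg (hp : ∀ ω, 0 ≤ p ω) (s : V) (t : W) (u : U) :
    0 ≤ prb p (fun ω => (f ω, g ω, h ω)) (s, t, u) *
        (Real.log (prb p (fun ω => (f ω, g ω, h ω)) (s, t, u)) + Real.log (prb p g t)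
         - Real.log (prb p (fun ω => (f ω, g ω)) (s, t))
         - Real.log (prb p (fun ω => (g ω, h ω)) (t, u)))
       - (prb p (fun ω => (f ω, g ω, h ω)) (s, t, u)
        - prb p (fun ω => (f ω, g ω)) (s, t) * prb p (fun ω => (g ω, h ω)) (t, u) / prb p g t) := by
  have := perterm (prb p (fun ω => (f ω, g ω, h ω)) (s, t, u))
    (prb p (fun ω => (f ω, g ω)) (s, t)) (prb p (fun ω => (g ω, h ω)) (t, u)) (prb p g t)
    (prb_nonneg hp _ _) (prb3_le_fg f g h hp s t u) (prb3_le_gh f g h hp s t u)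
    (prbfg_le_g f g hp s t) (prbgh_le_g g h hp t u)
  exact this.1

theorem G_eq_zero_iff (hp : ∀ ω, 0 ≤ p ω) (s : V) (t : W) (u : U) :
    (prb p (fun ω => (f ω, g ω, h ω)) (s, t, u) *
        (Real.log (prb p (fun ω => (f ω, g ω, h ω)) (s, t, u)) + Real.log (prb p g t)
         - Real.log (prb p (fun ω => (f ω, g ω)) (s, t))
         - Real.log (prb p (fun ω => (g ω, h ω)) (t, u)))
       - (prb p (fun ω => (f ω, g ω, h ω)) (s, t, u)
        - prb p (fun ω => (f ω, g ω)) (s, t) * prb p (fun ω => (g ω, h ω)) (t, u) / prb p g t)) = 0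
    ↔ prb p (fun ω => (f ω, g ω, h ω)) (s, t, u) * prb p g t
      = prb p (fun ω => (f ω, g ω)) (s, t) * prb p (fun ω => (g ω, h ω)) (t, u) := by
  have := perterm (prb p (fun ω => (f ω, g ω, h ω)) (s, t, u))
    (prb p (fun ω => (f ω, g ω)) (s, t)) (prb p (fun ω => (g ω, h ω)) (t, u)) (prb p g t)
    (prb_nonneg hp _ _) (prb3_le_fg f g h hp s t u) (prb3_le_gh f g h hp s t u)
    (prbfg_le_g f g hp s t) (prbgh_le_g g h hp t u)
  exact this.2

theorem mif_nonneg (hp : ∀ ω, 0 ≤ p ω) : 0 ≤ mif p f g h := by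
  rw [mif_eq_G]
  exact Finset.sum_nonneg fun s _ => Finset.sum_nonneg fun t _ =>
    Finset.sum_nonneg fun u _ => G_nonneg f g h hp s t u

theorem mif_eq_zero_iff (hp : ∀ ω, 0 ≤ p ω) :
    mif p f g h = 0 ↔ ∀ (s : V) (t : W) (u : U),
      prb p (fun ω => (f ω, g ω, h ω)) (s, t, u) * prb p g t
      = prb p (fun ω => (f ω, g ω)) (s, t) * prb p (fun ω => (g ω, h ω)) (t, u) := by
  rw [mif_eq_G]
  rw [sum3_eq_zero_iff (fun s t u => G_nonneg f g h hp s t u)]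
  apply forall_congr'; intro s
  apply forall_congr'; intro t
  apply forall_congr'; intro u
  exact G_eq_zero_iff f g h hp s t u

end MIlemmas
end MI

noncomputable section Bridge
set_option linter.unusedSectionVars false

open Finset

variable {ι : Type*} [Fintype ι] [DecidableEq ι] {s : ι → Type*}
  [∀ i, Fintype (s i)] [∀ i, DecidableEq (s i)]

theorem marginal_eq_prb (p : ((i : ι) → s i) → ℝ) (J : Finset ι) (a : (j : J) → s j.1) :
    marginal p J a = prb p (fun ω => (fun j : J => ω j.1)) a := by
  unfold marginal prb
  apply Finset.sum_nbij' (i := fun z => J.mergePi a z)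
    (j := fun ω => (fun i : (Jᶜ : Finset ι) => ω i.1))
  · intro z _
    simp only [Finset.mem_filter, Finset.mem_univ, true_and]
    funext j
    simp only [Finset.mergePi, j.2, dif_pos]
  · intro ω _; exact Finset.mem_univ _
  · intro z _
    funext i
    have hi : i.1 ∉ J := Finset.mem_compl.mp i.2
    simp only [Finset.mergePi, hi, dif_neg, not_false_iff]
  · intro ω hω
    simp only [Finset.mem_filter, Finset.mem_univ, true_and] at hω
    funext i
    by_cases h : i ∈ J
    · simp only [Finset.mergePi, h, dif_pos]
      exact (congrFun hω ⟨i, h⟩).symm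
    · simp only [Finset.mergePi, h, dif_neg, not_false_iff]
  · intro z _; rfl

theorem Hsh_eq_entf (p : ((i : ι) → s i) → ℝ) (J : Finset ι) :
    Hsh p J = entf p (fun ω => (fun j : J => ω j.1)) := by
  unfold Hsh entf
  congr 1
  apply Finset.sum_congr rfl
  intro a _
  rw [marginal_eq_prb]

theorem Hsh_to_entf {T : Type*} [Fintype T] [DecidableEq T]
    (p : ((i : ι) → s i) → ℝ) (J : Finset ι) (k : ((i : ι) → s i) → T)
    (e : ((j : J) → s j.1) → T) (he : Function.Injective e)
    (hk : ∀ ω, e (fun j : J => ω j.1) = k ω) :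
    Hsh p J = entf p k := by
  rw [Hsh_eq_entf]
  rw [← entf_comp_inj (p := p) he (fun ω => (fun j : J => ω j.1))]
  exact congrArg (entf p) (funext hk)

theorem Hsh_empty (p : ((i : ι) → s i) → ℝ) (hp1 : ∑ ω, p ω = 1) :
    Hsh p ∅ = 0 := by
  rw [Hsh_eq_entf]
  letI : IsEmpty ((∅ : Finset ι) : Type _) := Finset.isEmpty_coe_sort.mpr rfl
  exact entf_unique hp1 _

end Bridge

noncomputable section Main
set_option linter.unusedSectionVars false

open Finset

variable {n : ℕ} {s : Idx n → Type} [∀ i, Fintype (s i)] [∀ i, DecidableEq (s i)]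

def fA (ω : (i : Idx n) → s i) : s (Sum.inl 0) := ω (Sum.inl 0)
def fB (ω : (i : Idx n) → s i) : s (Sum.inl 1) := ω (Sum.inl 1)
def fC (ω : (i : Idx n) → s i) : s (Sum.inl 2) := ω (Sum.inl 2)
def fX (i : Fin n) (ω : (j : Idx n) → s j) : s (Sum.inr i) := ω (Sum.inr i)
def fXall (ω : (j : Idx n) → s j) : (i : Fin n) → s (Sum.inr i) := fun i => ω (Sum.inr i)

variable (p : ((i : Idx n) → s i) → ℝ)

def relAB (a a' : s (Sum.inl 0)) : Prop :=
  ∃ b, prb p (fun ω => (fA ω, fB ω)) (a, b) ≠ 0 ∧ prb p (fun ω => (fA ω, fB ω)) (a', b) ≠ 0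

@[reducible] def Wq : Type := Quot (relAB p)

noncomputable instance : DecidableEq (Wq p) := Classical.decEq _

noncomputable instance : Fintype (Wq p) :=
  Fintype.ofSurjective (Quot.mk (relAB p)) Quot.mk_surjective

def fW (ω : (i : Idx n) → s i) : Wq p := Quot.mk (relAB p) (fA ω)

section Wlemmas

theorem ne_zero_of_le {x y : ℝ} (hx : 0 ≤ x) (hxy : x ≤ y) (hne : x ≠ 0) : y ≠ 0 :=
  ne_of_gt (lt_of_lt_of_le (lt_of_le_of_ne hx (Ne.symm hne)) hxy)

theorem prb_self_ne_zero (hp : ∀ ω, 0 ≤ p ω) {ω : (i : Idx n) → s i} (hω : p ω ≠ 0)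
    {T : Type*} [DecidableEq T] (k : ((i : Idx n) → s i) → T) : prb p k (k ω) ≠ 0 := by
  have h1 : p ω ≤ prb p k (k ω) := Finset.single_le_sum (fun ω' _ => hp ω')
      (Finset.mem_filter.mpr ⟨Finset.mem_univ _, rfl⟩)
  exact ne_zero_of_le (hp ω) h1 hω

/-- within the support, `P(c|a) = P(c|b)` -/
theorem link (hp : ∀ ω, 0 ≤ p ω)
    (hF1 : ∀ a b c, prb p (fun ω => (fA ω, fB ω, fC ω)) (a, b, c) * prb p fB b
      = prb p (fun ω => (fA ω, fB ω)) (a, b) * prb p (fun ω => (fB ω, fC ω)) (b, c))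
    (hF2 : ∀ a b c, prb p (fun ω => (fA ω, fB ω, fC ω)) (a, b, c) * prb p fA a
      = prb p (fun ω => (fA ω, fB ω)) (a, b) * prb p (fun ω => (fA ω, fC ω)) (a, c)) :
    ∀ a b c, prb p (fun ω => (fA ω, fB ω)) (a, b) ≠ 0 →
    prb p (fun ω => (fB ω, fC ω)) (b, c) * prb p fA a
      = prb p (fun ω => (fA ω, fC ω)) (a, c) * prb p fB b := by
  intro a b c hab
  apply mul_left_cancel₀ hab
  have h3 := hF1 a b c
  have h4 := hF2 a b c
  linear_combination prb p fB b * h4 - prb p fA a * h3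

theorem rho_trans (hp : ∀ ω, 0 ≤ p ω)
    (hF1 : ∀ a b c, prb p (fun ω => (fA ω, fB ω, fC ω)) (a, b, c) * prb p fB b
      = prb p (fun ω => (fA ω, fB ω)) (a, b) * prb p (fun ω => (fB ω, fC ω)) (b, c))
    (hF2 : ∀ a b c, prb p (fun ω => (fA ω, fB ω, fC ω)) (a, b, c) * prb p fA a
      = prb p (fun ω => (fA ω, fB ω)) (a, b) * prb p (fun ω => (fA ω, fC ω)) (a, c)) :
    ∀ a a', Relation.EqvGen (relAB p) a a' → a = a' ∨
    (prb p fA a ≠ 0 ∧ prb p fA a' ≠ 0 ∧ ∀ c,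
      prb p (fun ω => (fA ω, fC ω)) (a, c) * prb p fA a'
        = prb p (fun ω => (fA ω, fC ω)) (a', c) * prb p fA a) := by
  intro a a' hgen
  induction hgen with
  | rel x y hxy =>
    right
    obtain ⟨b, hxb, hyb⟩ := hxy
    have hAx : prb p fA x ≠ 0 :=
      ne_zero_of_le (prb_nonneg hp _ _) (prbgh_le_g fA fB hp x b) hxb
    have hAy : prb p fA y ≠ 0 :=
      ne_zero_of_le (prb_nonneg hp _ _) (prbgh_le_g fA fB hp y b) hyb
    have hBb : prb p fB b ≠ 0 :=
      ne_zero_of_le (prb_nonneg hp _ _) (prbfg_le_g fA fB hp x b) hxb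
    refine ⟨hAx, hAy, fun c => ?_⟩
    have l1 := link p hp hF1 hF2 x b c hxb
    have l2 := link p hp hF1 hF2 y b c hyb
    apply mul_right_cancel₀ hBb
    linear_combination prb p fA x * l2 - prb p fA y * l1
  | refl x => left; rfl
  | symm x y _ ih =>
    rcases ih with h | ⟨h1, h2, h3⟩
    · left; exact h.symm
    · right; exact ⟨h2, h1, fun c => (h3 c).symm⟩
  | trans x y z _ _ ih1 ih2 =>
    rcases ih1 with h | ⟨h1, h2, h3⟩
    · rwa [h]
    rcases ih2 with h | ⟨h4, h5, h6⟩
    · right; rw [← h]; exact ⟨h1, h2, h3⟩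
    right
    refine ⟨h1, h5, fun c => ?_⟩
    apply mul_right_cancel₀ h2
    linear_combination prb p fA z * h3 c + prb p fA x * h6 c

end Wlemmas
end Main

section W2lemmas
variable {n : ℕ} {s : Idx n → Type} [∀ i, Fintype (s i)] [∀ i, DecidableEq (s i)]
variable (p : ((i : Idx n) → s i) → ℝ)
set_option linter.unusedSectionVars false

theorem prW_triple (a : s (Sum.inl 0)) (b : s (Sum.inl 1)) (w : Wq p) (c : s (Sum.inl 2)) :
    prb p (fun ω => ((fA ω, fB ω), fW p ω, fC ω)) ((a, b), w, c)
      = if Quot.mk (relAB p) a = w then prb p (fun ω => (fA ω, fB ω, fC ω)) (a, b, c) else 0 := by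
  by_cases hw : Quot.mk (relAB p) a = w
  · rw [if_pos hw]
    apply prb_congr
    intro ω
    simp only [Prod.mk.injEq]
    constructor
    · rintro ⟨⟨h1, h2⟩, _, h4⟩; exact ⟨h1, h2, h4⟩
    · rintro ⟨h1, h2, h3⟩
      refine ⟨⟨h1, h2⟩, ?_, h3⟩
      unfold fW
      rw [h1]; exact hw
  · rw [if_neg hw]
    apply prb_eq_zero
    intro ω h
    simp only [Prod.mk.injEq] at h
    obtain ⟨⟨h1, _⟩, h3, _⟩ := h
    unfold fW at h3
    rw [h1] at h3
    exact hw h3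

theorem prW_pairFW (a : s (Sum.inl 0)) (b : s (Sum.inl 1)) (w : Wq p) :
    prb p (fun ω => ((fA ω, fB ω), fW p ω)) ((a, b), w)
      = if Quot.mk (relAB p) a = w then prb p (fun ω => (fA ω, fB ω)) (a, b) else 0 := by
  by_cases hw : Quot.mk (relAB p) a = w
  · rw [if_pos hw]
    apply prb_congr
    intro ω
    simp only [Prod.mk.injEq]
    constructor
    · rintro ⟨⟨h1, h2⟩, _⟩; exact ⟨h1, h2⟩
    · rintro ⟨h1, h2⟩
      refine ⟨⟨h1, h2⟩, ?_⟩
      unfold fW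
      rw [h1]; exact hw
  · rw [if_neg hw]
    apply prb_eq_zero
    intro ω h
    simp only [Prod.mk.injEq] at h
    obtain ⟨⟨h1, _⟩, h3⟩ := h
    unfold fW at h3
    rw [h1] at h3
    exact hw h3

theorem prW_W (w : Wq p) :
    prb p (fW p) w = ∑ a', if Quot.mk (relAB p) a' = w then prb p fA a' else 0 := by
  have h := prb_comp_eq_sum (p := p) (Quot.mk (relAB p)) fA w
  rw [Finset.sum_filter] at h
  exact h

theorem prW_WC (w : Wq p) (c : s (Sum.inl 2)) :
    prb p (fun ω => (fW p ω, fC ω)) (w, c)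
      = ∑ a', if Quot.mk (relAB p) a' = w then prb p (fun ω => (fA ω, fC ω)) (a', c) else 0 := by
  have h := prb_comp_eq_sum (p := p)
    (fun x : s (Sum.inl 0) × s (Sum.inl 2) => (Quot.mk (relAB p) x.1, x.2))
    (fun ω => (fA ω, fC ω)) (w, c)
  rw [Finset.sum_filter, Fintype.sum_prod_type] at h
  have h0 : prb p (fun ω => (fW p ω, fC ω)) (w, c)
      = prb p (fun ω => (Quot.mk (relAB p) (fA ω, fC ω).1, (fA ω, fC ω).2)) (w, c) := rfl
  rw [h0, h]
  apply Finset.sum_congr rfl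
  intro a' _
  by_cases hw : Quot.mk (relAB p) a' = w
  · simp [hw]
  · simp [hw]

theorem factW (hp : ∀ ω, 0 ≤ p ω)
    (hF1 : ∀ a b c, prb p (fun ω => (fA ω, fB ω, fC ω)) (a, b, c) * prb p fB b
      = prb p (fun ω => (fA ω, fB ω)) (a, b) * prb p (fun ω => (fB ω, fC ω)) (b, c))
    (hF2 : ∀ a b c, prb p (fun ω => (fA ω, fB ω, fC ω)) (a, b, c) * prb p fA a
      = prb p (fun ω => (fA ω, fB ω)) (a, b) * prb p (fun ω => (fA ω, fC ω)) (a, c)) :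
    ∀ (x : s (Sum.inl 0) × s (Sum.inl 1)) (w : Wq p) (c : s (Sum.inl 2)),
      prb p (fun ω => ((fA ω, fB ω), fW p ω, fC ω)) (x, w, c) * prb p (fW p) w
      = prb p (fun ω => ((fA ω, fB ω), fW p ω)) (x, w)
        * prb p (fun ω => (fW p ω, fC ω)) (w, c) := by
  rintro ⟨a, b⟩ w c
  rw [prW_triple, prW_pairFW, prW_W, prW_WC]
  by_cases hw : Quot.mk (relAB p) a = w
  · rw [if_pos hw, if_pos hw, Finset.mul_sum, Finset.mul_sum]
    apply Finset.sum_congr rfl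
    intro a' _
    by_cases hw' : Quot.mk (relAB p) a' = w
    · rw [if_pos hw', if_pos hw']
      -- key pointwise identity
      by_cases hab : prb p (fun ω => (fA ω, fB ω)) (a, b) = 0
      · have h3 : prb p (fun ω => (fA ω, fB ω, fC ω)) (a, b, c) = 0 := by
          have hle := prb3_le_fg fA fB fC hp a b c
          have hge := prb_nonneg hp (fun ω => (fA ω, fB ω, fC ω)) (a, b, c)
          rw [hab] at hle; linarith
        rw [h3, hab, zero_mul, zero_mul]
      · have hAa : prb p fA a ≠ 0 :=
          ne_zero_of_le (prb_nonneg hp _ _) (prbgh_le_g fA fB hp a b) hab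
        by_cases hAa' : prb p fA a' = 0
        · have hAC' : prb p (fun ω => (fA ω, fC ω)) (a', c) = 0 := by
            have hle := prbgh_le_g fA fC hp a' c
            have hge := prb_nonneg hp (fun ω => (fA ω, fC ω)) (a', c)
            rw [hAa'] at hle; linarith
          rw [hAa', hAC', mul_zero, mul_zero]
        · -- both supports positive: use rho transfer
          have hQ : Quot.mk (relAB p) a = Quot.mk (relAB p) a' := by rw [hw, hw']
          have hEG := Quot.eqvGen_exact hQ
          have htrans : prb p (fun ω => (fA ω, fC ω)) (a, c) * prb p fA a'
              = prb p (fun ω => (fA ω, fC ω)) (a', c) * prb p fA a := by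
            rcases rho_trans p hp hF1 hF2 a a' hEG with h | ⟨_, _, h3⟩
            · rw [h]
            · exact h3 c
          apply mul_left_cancel₀ hAa
          have h4 := hF2 a b c
          linear_combination prb p fA a' * h4
            + prb p (fun ω => (fA ω, fB ω)) (a, b) * htrans
    · rw [if_neg hw', if_neg hw', mul_zero, mul_zero]
  · rw [if_neg hw, if_neg hw, zero_mul, zero_mul]

theorem asWB (hp : ∀ ω, 0 ≤ p ω) (hex : ∃ ω₀, p ω₀ ≠ 0) :
    ∃ φ : s (Sum.inl 1) → Wq p, ∀ ω, p ω ≠ 0 → fW p ω = φ (fB ω) := by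
  obtain ⟨ω₀, hω₀⟩ := hex
  refine ⟨fun b => if h : ∃ a, prb p (fun ω => (fA ω, fB ω)) (a, b) ≠ 0
    then Quot.mk (relAB p) h.choose else Quot.mk (relAB p) (fA ω₀), ?_⟩
  intro ω hω
  have hab : prb p (fun ω' => (fA ω', fB ω')) (fA ω, fB ω) ≠ 0 :=
    prb_self_ne_zero p hp hω _
  have hex2 : ∃ a, prb p (fun ω' => (fA ω', fB ω')) (a, fB ω) ≠ 0 := ⟨fA ω, hab⟩
  show fW p ω = if h : ∃ a, prb p (fun ω' => (fA ω', fB ω')) (a, fB ω) ≠ 0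
    then Quot.mk (relAB p) h.choose else Quot.mk (relAB p) (fA ω₀)
  rw [dif_pos hex2]
  exact Quot.sound ⟨fB ω, hab, hex2.choose_spec⟩

end W2lemmas

section S2sec
variable {n : ℕ} {s : Idx n → Type} [∀ i, Fintype (s i)] [∀ i, DecidableEq (s i)]
variable (p : ((i : Idx n) → s i) → ℝ)
set_option linter.unusedSectionVars false

theorem entf_swap {Ω : Type*} [Fintype Ω] (q : Ω → ℝ) {V W : Type*}
    [Fintype V] [DecidableEq V] [Fintype W] [DecidableEq W] (f : Ω → V) (g : Ω → W) :
    entf q (fun ω => (f ω, g ω)) = entf q (fun ω => (g ω, f ω)) :=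
  (entf_comp_inj (e := Prod.swap)
    (fun a b h => by simpa [Prod.ext_iff, and_comm] using h) (fun ω => (f ω, g ω))).symm

theorem S2lemma (hp : ∀ ω, 0 ≤ p ω) :
    ∀ (k : ℕ) (hk : k ≤ n),
      entf p (fun ω => ((fun j : Fin k => ω (Sum.inr ⟨j.1, lt_of_lt_of_le j.2 hk⟩)), fW p ω))
          + ((k : ℝ) - 1) * entf p (fW p)
        ≤ ∑ j : Fin k, entf p (fun ω => (fX ⟨j.1, lt_of_lt_of_le j.2 hk⟩ ω, fW p ω)) := by
  intro k
  induction k with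
  | zero =>
    intro hk
    have h0 : entf p (fun ω => ((fun j : Fin 0 => ω (Sum.inr ⟨j.1, lt_of_lt_of_le j.2 hk⟩)),
        fW p ω)) = entf p (fW p) := by
      apply entf_congr (u := Prod.snd)
        (v := fun w => (default, w))
      · intro ω _; rfl
      · intro ω _
        exact Prod.ext (Subsingleton.elim _ _) rfl
    rw [h0]
    simp only [Nat.cast_zero, Finset.univ_eq_empty, Finset.sum_empty]
    linarith
  | succ k ih =>
    intro hk
    have hk' : k ≤ n := Nat.le_of_succ_le hk
    have ihk := ih hk'
    have hmif := mif_nonneg (p := p)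
      (fun ω => (fun j : Fin k => ω (Sum.inr ⟨j.1, lt_of_lt_of_le j.2 hk'⟩)))
      (fW p) (fX ⟨k, hk⟩) hp
    rw [mif] at hmif
    -- recode the triple as the (k+1)-tuple with W
    have hrec : entf p (fun ω =>
        ((fun j : Fin k => ω (Sum.inr ⟨j.1, lt_of_lt_of_le j.2 hk'⟩)), fW p ω, fX ⟨k, hk⟩ ω))
        = entf p (fun ω =>
          ((fun j : Fin (k+1) => ω (Sum.inr ⟨j.1, lt_of_lt_of_le j.2 hk⟩)), fW p ω)) := by
      apply entf_congr
        (u := fun x => ((fun j : Fin (k+1) => if h : j.1 < k then x.1 ⟨j.1, h⟩ else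
          cast (by
            have hjk : j.1 = k := Nat.le_antisymm (Nat.lt_succ_iff.mp j.2) (Nat.le_of_not_lt h)
            exact congrArg (fun m => s (Sum.inr m)) (Fin.ext hjk.symm)
            : s (Sum.inr ⟨k, hk⟩) = s (Sum.inr ⟨j.1, lt_of_lt_of_le j.2 hk⟩)) x.2.2),
          x.2.1))
        (v := fun y => ((fun j : Fin k => y.1 ⟨j.1, Nat.lt_succ_of_lt j.2⟩), y.2,
          y.1 ⟨k, Nat.lt_succ_self k⟩))
      · intro ω _
        refine Prod.ext ?_ rfl
        funext j
        by_cases h : j.1 < k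
        · simp only [dif_pos h]
        · simp only [dif_neg h]
          obtain ⟨jv, hjv⟩ := j
          have hjk : jv = k := Nat.le_antisymm (Nat.lt_succ_iff.mp hjv) (Nat.le_of_not_lt h)
          subst hjk
          rfl
      · intro ω _
        rfl
    rw [hrec] at hmif
    have hswap : entf p (fun ω => (fW p ω, fX ⟨k, hk⟩ ω))
        = entf p (fun ω => (fX ⟨k, hk⟩ ω, fW p ω)) := entf_swap p _ _
    rw [hswap] at hmif
    have hsum : ∑ j : Fin (k+1), entf p (fun ω => (fX ⟨j.1, lt_of_lt_of_le j.2 hk⟩ ω, fW p ω))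
        = (∑ j : Fin k, entf p (fun ω => (fX ⟨j.1, lt_of_lt_of_le j.2 hk'⟩ ω, fW p ω)))
          + entf p (fun ω => (fX ⟨k, hk⟩ ω, fW p ω)) := by
      rw [Fin.sum_univ_castSucc]
      rfl
    rw [hsum]
    push_cast
    linarith
end S2sec

/-- The classical constrained inequality of Makarychev et al.: for jointly distributed
discrete random variables `A, B, C, X_1, …, X_n` (given by a joint pmf `p`) with
`I(A:C|B) = I(B:C|A) = 0`:
`H(X_1…X_n) + (n-1) I(AB:C) ≤ ∑ H(X_i) + ∑ I(A:B|X_i)`. -/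
theorem classical_constrained_inequality (n : ℕ) (s : Idx n → Type)
    [∀ i, Fintype (s i)] [∀ i, DecidableEq (s i)]
    (p : ((i : Idx n) → s i) → ℝ)
    (hp : ∀ x, 0 ≤ p x) (hp1 : ∑ x, p x = 1)
    (h1 : Ish p (pA n) (pC n) (pB n) = 0)
    (h2 : Ish p (pB n) (pC n) (pA n) = 0) :
    Hsh p (pXall n) + ((n : ℝ) - 1) * Ish p (pA n ∪ pB n) (pC n) ∅ ≤
      (∑ i : Fin n, Hsh p (pX n i)) + ∑ i : Fin n, Ish p (pA n) (pB n) (pX n i) := by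
  classical
  have hex : ∃ ω₀, p ω₀ ≠ 0 := by
    by_contra hne
    push_neg at hne
    rw [Finset.sum_eq_zero (fun ω _ => hne ω)] at hp1
    exact one_ne_zero hp1.symm
  -- ===== bridges =====
  have bXall : Hsh p (pXall n) = entf p fXall :=
    Hsh_to_entf p _ fXall
      (fun F => (fun i : Fin n => F ⟨Sum.inr i, by simp [pXall]⟩))
      (by intro F G h
          funext j
          obtain ⟨j1, hj⟩ := j
          simp only [pXall, Finset.mem_image, Finset.mem_univ, true_and] at hj
          obtain ⟨i, rfl⟩ := hj
          exact congrFun h i)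
      (fun ω => rfl)
  have bXi : ∀ i : Fin n, Hsh p (pX n i) = entf p (fX i) := fun i =>
    Hsh_to_entf p _ (fX i)
      (fun F => F ⟨Sum.inr i, by simp [pX]⟩)
      (by intro F G h
          funext j
          obtain ⟨j1, hj⟩ := j
          simp only [pX, Finset.mem_singleton] at hj
          subst hj
          exact h)
      (fun ω => rfl)
  have bB : Hsh p (pB n) = entf p fB :=
    Hsh_to_entf p _ fB
      (fun F => F ⟨Sum.inl 1, by simp [pB]⟩)
      (by intro F G h
          funext j
          obtain ⟨j1, hj⟩ := j
          simp only [pB, Finset.mem_singleton] at hj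
          subst hj
          exact h)
      (fun ω => rfl)
  have bA : Hsh p (pA n) = entf p fA :=
    Hsh_to_entf p _ fA
      (fun F => F ⟨Sum.inl 0, by simp [pA]⟩)
      (by intro F G h
          funext j
          obtain ⟨j1, hj⟩ := j
          simp only [pA, Finset.mem_singleton] at hj
          subst hj
          exact h)
      (fun ω => rfl)
  have bC : Hsh p (pC n) = entf p fC :=
    Hsh_to_entf p _ fC
      (fun F => F ⟨Sum.inl 2, by simp [pC]⟩)
      (by intro F G h
          funext j
          obtain ⟨j1, hj⟩ := j
          simp only [pC, Finset.mem_singleton] at hj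
          subst hj
          exact h)
      (fun ω => rfl)
  have bAB : Hsh p (pA n ∪ pB n) = entf p (fun ω => (fA ω, fB ω)) :=
    Hsh_to_entf p _ _
      (fun F => (F ⟨Sum.inl 0, by simp [pA, pB]⟩, F ⟨Sum.inl 1, by simp [pA, pB]⟩))
      (by intro F G h
          funext j
          obtain ⟨j1, hj⟩ := j
          simp only [pA, pB, Finset.mem_union, Finset.mem_singleton] at hj
          rcases hj with rfl | rfl
          · exact congrArg Prod.fst h
          · exact congrArg Prod.snd h)
      (fun ω => rfl)
  have bCB : Hsh p (pC n ∪ pB n) = entf p (fun ω => (fB ω, fC ω)) :=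
    Hsh_to_entf p _ _
      (fun F => (F ⟨Sum.inl 1, by simp [pC, pB]⟩, F ⟨Sum.inl 2, by simp [pC, pB]⟩))
      (by intro F G h
          funext j
          obtain ⟨j1, hj⟩ := j
          simp only [pC, pB, Finset.mem_union, Finset.mem_singleton] at hj
          rcases hj with rfl | rfl
          · exact congrArg Prod.snd h
          · exact congrArg Prod.fst h)
      (fun ω => rfl)
  have bBA : Hsh p (pB n ∪ pA n) = entf p (fun ω => (fB ω, fA ω)) :=
    Hsh_to_entf p _ _
      (fun F => (F ⟨Sum.inl 1, by simp [pA, pB]⟩, F ⟨Sum.inl 0, by simp [pA, pB]⟩))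
      (by intro F G h
          funext j
          obtain ⟨j1, hj⟩ := j
          simp only [pA, pB, Finset.mem_union, Finset.mem_singleton] at hj
          rcases hj with rfl | rfl
          · exact congrArg Prod.fst h
          · exact congrArg Prod.snd h)
      (fun ω => rfl)
  have bCA : Hsh p (pC n ∪ pA n) = entf p (fun ω => (fA ω, fC ω)) :=
    Hsh_to_entf p _ _
      (fun F => (F ⟨Sum.inl 0, by simp [pC, pA]⟩, F ⟨Sum.inl 2, by simp [pC, pA]⟩))
      (by intro F G h
          funext j
          obtain ⟨j1, hj⟩ := j
          simp only [pC, pA, Finset.mem_union, Finset.mem_singleton] at hj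
          rcases hj with rfl | rfl
          · exact congrArg Prod.snd h
          · exact congrArg Prod.fst h)
      (fun ω => rfl)
  have bACB : Hsh p (pA n ∪ pC n ∪ pB n) = entf p (fun ω => (fA ω, fB ω, fC ω)) :=
    Hsh_to_entf p _ _
      (fun F => (F ⟨Sum.inl 0, by simp [pA, pB, pC]⟩,
        F ⟨Sum.inl 1, by simp [pA, pB, pC]⟩, F ⟨Sum.inl 2, by simp [pA, pB, pC]⟩))
      (by intro F G h
          funext j
          obtain ⟨j1, hj⟩ := j
          simp only [pA, pB, pC, Finset.mem_union, Finset.mem_singleton] at hj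
          rcases hj with (rfl | rfl) | rfl
          · exact congrArg Prod.fst h
          · exact congrArg Prod.snd (congrArg Prod.snd h)
          · exact congrArg Prod.fst (congrArg Prod.snd h))
      (fun ω => rfl)
  have bBCA : Hsh p (pB n ∪ pC n ∪ pA n) = entf p (fun ω => (fB ω, fA ω, fC ω)) :=
    Hsh_to_entf p _ _
      (fun F => (F ⟨Sum.inl 1, by simp [pA, pB, pC]⟩,
        F ⟨Sum.inl 0, by simp [pA, pB, pC]⟩, F ⟨Sum.inl 2, by simp [pA, pB, pC]⟩))
      (by intro F G h
          funext j
          obtain ⟨j1, hj⟩ := j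
          simp only [pA, pB, pC, Finset.mem_union, Finset.mem_singleton] at hj
          rcases hj with (rfl | rfl) | rfl
          · exact congrArg Prod.fst h
          · exact congrArg Prod.snd (congrArg Prod.snd h)
          · exact congrArg Prod.fst (congrArg Prod.snd h))
      (fun ω => rfl)
  have bABC : Hsh p (pA n ∪ pB n ∪ pC n) = entf p (fun ω => (fA ω, fB ω, fC ω)) :=
    Hsh_to_entf p _ _
      (fun F => (F ⟨Sum.inl 0, by simp [pA, pB, pC]⟩,
        F ⟨Sum.inl 1, by simp [pA, pB, pC]⟩, F ⟨Sum.inl 2, by simp [pA, pB, pC]⟩))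
      (by intro F G h
          funext j
          obtain ⟨j1, hj⟩ := j
          simp only [pA, pB, pC, Finset.mem_union, Finset.mem_singleton] at hj
          rcases hj with (rfl | rfl) | rfl
          · exact congrArg Prod.fst h
          · exact congrArg Prod.fst (congrArg Prod.snd h)
          · exact congrArg Prod.snd (congrArg Prod.snd h))
      (fun ω => rfl)
  have bAX : ∀ i, Hsh p (pA n ∪ pX n i) = entf p (fun ω => (fA ω, fX i ω)) := fun i =>
    Hsh_to_entf p _ _
      (fun F => (F ⟨Sum.inl 0, by simp [pA, pX]⟩, F ⟨Sum.inr i, by simp [pA, pX]⟩))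
      (by intro F G h
          funext j
          obtain ⟨j1, hj⟩ := j
          simp only [pA, pX, Finset.mem_union, Finset.mem_singleton] at hj
          rcases hj with rfl | rfl
          · exact congrArg Prod.fst h
          · exact congrArg Prod.snd h)
      (fun ω => rfl)
  have bBX : ∀ i, Hsh p (pB n ∪ pX n i) = entf p (fun ω => (fX i ω, fB ω)) := fun i =>
    Hsh_to_entf p _ _
      (fun F => (F ⟨Sum.inr i, by simp [pB, pX]⟩, F ⟨Sum.inl 1, by simp [pB, pX]⟩))
      (by intro F G h
          funext j
          obtain ⟨j1, hj⟩ := j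
          simp only [pB, pX, Finset.mem_union, Finset.mem_singleton] at hj
          rcases hj with rfl | rfl
          · exact congrArg Prod.snd h
          · exact congrArg Prod.fst h)
      (fun ω => rfl)
  have bABX : ∀ i, Hsh p (pA n ∪ pB n ∪ pX n i)
      = entf p (fun ω => (fA ω, fX i ω, fB ω)) := fun i =>
    Hsh_to_entf p _ _
      (fun F => (F ⟨Sum.inl 0, by simp [pA, pB, pX]⟩,
        F ⟨Sum.inr i, by simp [pA, pB, pX]⟩, F ⟨Sum.inl 1, by simp [pA, pB, pX]⟩))
      (by intro F G h
          funext j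
          obtain ⟨j1, hj⟩ := j
          simp only [pA, pB, pX, Finset.mem_union, Finset.mem_singleton] at hj
          rcases hj with (rfl | rfl) | rfl
          · exact congrArg Prod.fst h
          · exact congrArg Prod.snd (congrArg Prod.snd h)
          · exact congrArg Prod.fst (congrArg Prod.snd h))
      (fun ω => rfl)
  -- ===== constraints to factorizations =====
  have hIsh1 : mif p fA fB fC = 0 := by
    rw [Ish, bAB, bCB, bB, bACB] at h1
    rw [mif]
    linarith
  have hF1 := (mif_eq_zero_iff fA fB fC hp).mp hIsh1
  have hIsh2 : mif p fB fA fC = 0 := by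
    rw [Ish, bBA, bCA, bA, bBCA] at h2
    rw [mif]
    linarith
  have hF2raw := (mif_eq_zero_iff fB fA fC hp).mp hIsh2
  have hswap3 : ∀ a b c, prb p (fun ω => (fB ω, fA ω, fC ω)) (b, a, c)
      = prb p (fun ω => (fA ω, fB ω, fC ω)) (a, b, c) := by
    intro a b c
    apply prb_congr
    intro ω
    simp only [Prod.mk.injEq]
    tauto
  have hswap2 : ∀ a b, prb p (fun ω => (fB ω, fA ω)) (b, a)
      = prb p (fun ω => (fA ω, fB ω)) (a, b) := by
    intro a b
    apply prb_congr
    intro ω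
    simp only [Prod.mk.injEq]
    tauto
  have hF2 : ∀ a b c, prb p (fun ω => (fA ω, fB ω, fC ω)) (a, b, c) * prb p fA a
      = prb p (fun ω => (fA ω, fB ω)) (a, b) * prb p (fun ω => (fA ω, fC ω)) (a, c) := by
    intro a b c
    have hr := hF2raw b a c
    rwa [hswap3, hswap2] at hr
  -- ===== the common-information variable W =====
  obtain ⟨φB, hφB⟩ := asWB p hp hex
  have hfact := factW p hp hF1 hF2
  have hmifFWC : mif p (fun ω => (fA ω, fB ω)) (fW p) fC = 0 :=
    (mif_eq_zero_iff (fun ω => (fA ω, fB ω)) (fW p) fC hp).mpr hfact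
  -- I(AB:C) = I(W:C)
  have hM3 : entf p (fun ω => (fA ω, fB ω)) + entf p fC - entf p (fun ω => (fA ω, fB ω, fC ω))
      = entf p (fW p) + entf p fC - entf p (fun ω => (fW p ω, fC ω)) := by
    have hmz := hmifFWC
    rw [mif] at hmz
    have r1 : entf p (fun ω => ((fA ω, fB ω), fW p ω)) = entf p (fun ω => (fA ω, fB ω)) :=
      entf_pair_det (fun x => Quot.mk (relAB p) x.1) (fun ω _ => rfl)
    have r2 : entf p (fun ω => ((fA ω, fB ω), fW p ω, fC ω))
        = entf p (fun ω => (fA ω, fB ω, fC ω)) :=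
      entf_congr (u := fun y => (y.1.1, y.1.2, y.2.2))
        (v := fun z => ((z.1, z.2.1), Quot.mk (relAB p) z.1, z.2.2))
        (fun ω _ => rfl) (fun ω _ => rfl)
    linarith
  -- I(W:C) ≤ H(W)
  have hM4 : entf p (fW p) + entf p fC - entf p (fun ω => (fW p ω, fC ω)) ≤ entf p (fW p) := by
    have hle := entf_le_pair hp fC (fW p)
    have hs : entf p (fun ω => (fC ω, fW p ω)) = entf p (fun ω => (fW p ω, fC ω)) :=
      entf_swap p fC (fW p)
    linarith
  -- I(W:C) ≥ 0
  have hIWC : 0 ≤ entf p (fW p) + entf p fC - entf p (fun ω => (fW p ω, fC ω)) := by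
    have h0 := mif_nonneg (fW p) (fun _ => ()) fC hp
    rw [mif] at h0
    have r1 : entf p (fun ω => (fW p ω, (fun _ : (i : Idx n) → s i => ()) ω))
        = entf p (fW p) :=
      entf_pair_det (fun _ => ()) (fun ω _ => rfl)
    have r2 : entf p (fun ω => ((fun _ : (i : Idx n) → s i => ()) ω, fC ω))
        = entf p fC :=
      entf_congr (u := fun y => y.2) (v := fun z => ((), z))
        (fun ω _ => rfl) (fun ω _ => rfl)
    have r3 : entf p (fun _ : (i : Idx n) → s i => ()) = 0 := entf_unique hp1 _
    have r4 : entf p (fun ω => (fW p ω, (fun _ : (i : Idx n) → s i => ()) ω, fC ω))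
        = entf p (fun ω => (fW p ω, fC ω)) :=
      entf_congr (u := fun y => (y.1, y.2.2)) (v := fun z => (z.1, (), z.2))
        (fun ω _ => rfl) (fun ω _ => rfl)
    linarith
  -- I(A:B|X_i) ≥ H(W|X_i)
  have hM1 : ∀ i : Fin n, entf p (fun ω => (fX i ω, fW p ω)) - entf p (fX i)
      ≤ mif p fA (fX i) fB := by
    intro i
    have h0 := mif_nonneg fA (fun ω => (fX i ω, fW p ω)) fB hp
    rw [mif] at h0
    have ra : entf p (fun ω => (fA ω, (fX i ω, fW p ω)))
        = entf p (fun ω => (fA ω, fX i ω)) :=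
      entf_congr (u := fun y => (y.1, y.2.1))
        (v := fun z => (z.1, (z.2, Quot.mk (relAB p) z.1)))
        (fun ω _ => rfl) (fun ω _ => rfl)
    have rb : entf p (fun ω => ((fX i ω, fW p ω), fB ω))
        = entf p (fun ω => (fX i ω, fB ω)) :=
      entf_congr (u := fun y => (y.1.1, y.2))
        (v := fun z => ((z.1, φB z.2), z.2))
        (fun ω _ => rfl)
        (fun ω hω => by rw [hφB ω hω])
    have rc : entf p (fun ω => (fA ω, (fX i ω, fW p ω), fB ω))
        = entf p (fun ω => (fA ω, fX i ω, fB ω)) :=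
      entf_congr (u := fun y => (y.1, y.2.1.1, y.2.2))
        (v := fun z => (z.1, (z.2.1, Quot.mk (relAB p) z.1), z.2.2))
        (fun ω _ => rfl) (fun ω _ => rfl)
    rw [mif]
    linarith
  -- merging lemma at k = n
  have hS2 := S2lemma p hp n le_rfl
  have hS2' : entf p (fun ω => (fXall ω, fW p ω)) + ((n : ℝ) - 1) * entf p (fW p)
      ≤ ∑ i : Fin n, entf p (fun ω => (fX i ω, fW p ω)) := hS2
  have hM2 : entf p fXall ≤ entf p (fun ω => (fXall ω, fW p ω)) :=
    entf_le_pair hp fXall (fW p)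
  -- ===== goal rewriting =====
  have gIsh : Ish p (pA n ∪ pB n) (pC n) ∅
      = entf p (fun ω => (fA ω, fB ω)) + entf p fC
        - entf p (fun ω => (fA ω, fB ω, fC ω)) := by
    rw [Ish]
    simp only [Finset.union_empty]
    rw [bAB, bC, bABC, Hsh_empty p hp1]
    ring
  have gIshi : ∀ i, Ish p (pA n) (pB n) (pX n i) = mif p fA (fX i) fB := by
    intro i
    rw [Ish, mif, bAX i, bBX i, bXi i, bABX i]
  have gsum1 : ∑ i : Fin n, Hsh p (pX n i) = ∑ i : Fin n, entf p (fX i) :=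
    Finset.sum_congr rfl (fun i _ => bXi i)
  have gsum2 : ∑ i : Fin n, Ish p (pA n) (pB n) (pX n i)
      = ∑ i : Fin n, mif p fA (fX i) fB :=
    Finset.sum_congr rfl (fun i _ => gIshi i)
  rw [bXall, gIsh, gsum1, gsum2]
  -- ===== final chain =====
  rcases Nat.eq_zero_or_pos n with hn0 | hn1
  · subst hn0
    simp only [Finset.univ_eq_empty, Finset.sum_empty, Nat.cast_zero]
    have hXall0 : entf p fXall = 0 := entf_unique hp1 _
    rw [hXall0]
    nlinarith [hIWC, hM3]
  · have hcoef : (0 : ℝ) ≤ (n : ℝ) - 1 := by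
      have : (1 : ℝ) ≤ (n : ℝ) := by exact_mod_cast hn1
      linarith
    have hsum : ∑ i : Fin n, (entf p (fun ω => (fX i ω, fW p ω)) - entf p (fX i))
        ≤ ∑ i : Fin n, mif p fA (fX i) fB :=
      Finset.sum_le_sum (fun i _ => hM1 i)
    rw [Finset.sum_sub_distrib] at hsum
    have hmul : ((n : ℝ) - 1) * (entf p (fW p) + entf p fC
        - entf p (fun ω => (fW p ω, fC ω))) ≤ ((n : ℝ) - 1) * entf p (fW p) :=
      mul_le_mul_of_nonneg_left hM4 hcoef
    have hrs : ((n : ℝ) - 1) * (entf p (fun ω => (fA ω, fB ω)) + entf p fC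
        - entf p (fun ω => (fA ω, fB ω, fC ω)))
        = ((n : ℝ) - 1) * (entf p (fW p) + entf p fC
          - entf p (fun ω => (fW p ω, fC ω))) := by rw [hM3]
    linarith
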